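/- The quadratic Poisson algebra Q_{e(2)}(2) from the Casimir K₁₂₃ = x₁² + x₂² of the Euclidean subalgebra a₍₁₂₃₎ = span{x₁,x₂,x₃}: set A₁ = x₁, A₂ = x₂, A₃ = x₃, A₄ = x₁x₅ + x₂x₆ − x₄², A₅ = x₁x₆ − x₂x₅ − 2x₃x₄. Then {Aⱼ, K₁₂₃} = 0 for all 1 ≤ j ≤ 5; {A₅, Aⱼ} = 0 for all j; and {A₁, A₂} = 0, {A₁, A₃} = −A₂, {A₂, A₃} = A₁, {A₁, A₄} = 2A₂A₃, {A₂, A₄} = −2A₁A₃, {A₃, A₄} = 0. -/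
import Mathlib


open MvPolynomial

/-- Structure-constant polynomials `c j k = {x_{j+1}, x_{k+1}}` of the 2D conformal
algebra `𝔠(2)` (indices `0,…,5` correspond to `x₁,…,x₆`). -/
noncomputable def c2Mat : Matrix (Fin 6) (Fin 6) (MvPolynomial (Fin 6) ℝ) :=
  !![0,            0,            -X 1, X 0,  2 * X 3,      2 * X 2;
     0,            0,            X 0,  X 1,  -(2 * X 2),   2 * X 3;
     X 1,          -X 0,         0,    0,    X 5,          -X 4;
     -X 0,         -X 1,         0,    0,    X 4,          X 5;
     -(2 * X 3),   2 * X 2,      -X 5, -X 4, 0,            0;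
     -(2 * X 2),   -(2 * X 3),   X 4,  -X 5, 0,            0]

/-- The Lie–Poisson bracket of `𝔠(2)` on `ℝ[x₁,…,x₆]`:
`{p,q} = ∑_{j,k} c_{jk} (∂p/∂x_j) (∂q/∂x_k)`. -/
noncomputable def pb (p q : MvPolynomial (Fin 6) ℝ) : MvPolynomial (Fin 6) ℝ :=
  ∑ j : Fin 6, ∑ k : Fin 6, c2Mat j k * pderiv j p * pderiv k q

/-- Generators of the quadratic Poisson algebra `Q_{e(2)}(2)`:
`A₁ = x₁, A₂ = x₂, A₃ = x₃, A₄ = x₁x₅ + x₂x₆ − x₄², A₅ = x₁x₆ − x₂x₅ − 2x₃x₄`. -/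
noncomputable def Ae : Fin 5 → MvPolynomial (Fin 6) ℝ :=
  ![X 0,
    X 1,
    X 2,
    X 0 * X 4 + X 1 * X 5 - X 3 ^ 2,
    X 0 * X 5 - X 1 * X 4 - 2 * X 2 * X 3]

private lemma v5 {α} (a b c d e f : α) : ![a,b,c,d,e,f] 5 = f := rfl
private lemma v4 {α} (a b c d e f : α) : ![a,b,c,d,e,f] 4 = e := rfl
private lemma v3 {α} (a b c d e f : α) : ![a,b,c,d,e,f] 3 = d := rfl
private lemma v2 {α} (a b c d e f : α) : ![a,b,c,d,e,f] 2 = c := rfl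
private lemma v1 {α} (a b c d e f : α) : ![a,b,c,d,e,f] 1 = b := rfl
private lemma v0 {α} (a b c d e f : α) : ![a,b,c,d,e,f] 0 = a := rfl

private lemma w5 {α} (a : α) (s : Fin 5 → α) : Matrix.vecCons a s 5 = s 4 := rfl
private lemma w4 {α} (a : α) (s : Fin 4 → α) : Matrix.vecCons a s 4 = s 3 := rfl
private lemma w3 {α} (a : α) (s : Fin 3 → α) : Matrix.vecCons a s 3 = s 2 := rfl
private lemma w2 {α} (a : α) (s : Fin 2 → α) : Matrix.vecCons a s 2 = s 1 := rfl
private lemma w1 {α} (a : α) (s : Fin 1 → α) : Matrix.vecCons a s 1 = s 0 := rfl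

private lemma wh {α n} (a : α) : Matrix.vecHead (fun _ : Fin (n+1) => a) = a := rfl
private lemma wt {α n} (a : α) : Matrix.vecTail (fun _ : Fin (n+2) => a) = fun _ => a := rfl

private lemma pderiv_two (j : Fin 6) : pderiv j (2 : MvPolynomial (Fin 6) ℝ) = 0 := by
  rw [← map_ofNat (C : ℝ →+* MvPolynomial (Fin 6) ℝ) 2, pderiv_C]

set_option maxHeartbeats 4000000 in
/-- The quadratic Poisson algebra `Q_{e(2)}(2)` from the Casimir
`K₁₂₃ = x₁² + x₂²` of the Euclidean subalgebra `a₍₁₂₃₎`. -/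
theorem stmt17 :
    (∀ j : Fin 5, pb (Ae j) (X 0 ^ 2 + X 1 ^ 2) = 0) ∧
    (∀ j : Fin 5, pb (Ae 4) (Ae j) = 0) ∧
    pb (Ae 0) (Ae 1) = 0 ∧
    pb (Ae 0) (Ae 2) = -Ae 1 ∧
    pb (Ae 1) (Ae 2) = Ae 0 ∧
    pb (Ae 0) (Ae 3) = 2 * Ae 1 * Ae 2 ∧
    pb (Ae 1) (Ae 3) = -2 * Ae 0 * Ae 2 ∧
    pb (Ae 2) (Ae 3) = 0 := by
  refine ⟨fun j => ?_, fun j => ?_, ?_, ?_, ?_, ?_, ?_, ?_⟩ <;>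
    first
    | (fin_cases j <;>
        simp [pb, c2Mat, Ae, Fin.sum_univ_six, pderiv_X, pderiv_two,
          Matrix.cons_val_zero, Matrix.cons_val_one, Matrix.head_cons,
          v0, v1, v2, v3, v4, v5, w1, w2, w3, w4, w5, wh, wt] <;> ring)
    | (simp [pb, c2Mat, Ae, Fin.sum_univ_six, pderiv_X, pderiv_two,
        Matrix.cons_val_zero, Matrix.cons_val_one, Matrix.head_cons,
        v0, v1, v2, v3, v4, v5, w1, w2, w3, w4, w5, wh, wt] <;> ring)
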